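/- Let Q > 0, ω > 0, x > 0, y > 0 and ℓ ∈ ℕ, and let V be the extremal Reissner–Nordström effective potential. Then V admits no trapping well: there do not exist real numbers 0 < a < b < c such that V(b) < V(a) and V(b) < V(c). -/

import Mathlib

open Real

/-- The effective radial potential of a charged massive scalar in the extremal
Reissner–Nordström background, in terms of `x`, `y` encoding the bound-state and
superradiant conditions. -/
noncomputable def Vrn (Q ω x y : ℝ) (ℓ : ℕ) (r : ℝ) : ℝ :=
  (1 + x)^2 * ω^2 + 4*Q*ω^2*(x^2 + 2*x + y)/r
    + ((ℓ : ℝ)*((ℓ : ℝ) + 1) + 4*Q^2*ω^2*(x^2 + 2*x - (y - 4)*y))/r^2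
    - 16*Q^3*(y - 1)*y*ω^2/r^3 - 16*Q^4*y^2*ω^2/r^4

lemma Vrn_hasDerivAt (Q ω x y : ℝ) (ℓ : ℕ) {r : ℝ} (hr : r ≠ 0) :
    HasDerivAt (Vrn Q ω x y ℓ)
      (-(4*Q*ω^2*(x^2+2*x+y)*r^3
        + 2*((ℓ:ℝ)*((ℓ:ℝ)+1) + 4*Q^2*ω^2*(x^2+2*x-(y-4)*y))*r^2
        - 48*Q^3*(y-1)*y*ω^2*r - 64*Q^4*y^2*ω^2) / r^5) r := by
  have h1 : HasDerivAt (fun s : ℝ => s) 1 r := hasDerivAt_id r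
  have h2 : HasDerivAt (fun s : ℝ => s^2) (2*r^1) r := by simpa using hasDerivAt_pow 2 r
  have h3 : HasDerivAt (fun s : ℝ => s^3) (3*r^2) r := by simpa using hasDerivAt_pow 3 r
  have h4 : HasDerivAt (fun s : ℝ => s^4) (4*r^3) r := by simpa using hasDerivAt_pow 4 r
  have hd := ((((hasDerivAt_const r ((1+x)^2*ω^2)).add
      ((hasDerivAt_const r (4*Q*ω^2*(x^2+2*x+y))).div h1 hr)).add
      ((hasDerivAt_const r ((ℓ:ℝ)*((ℓ:ℝ)+1)+4*Q^2*ω^2*(x^2+2*x-(y-4)*y))).div h2 (pow_ne_zero 2 hr))).sub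
      ((hasDerivAt_const r (16*Q^3*(y-1)*y*ω^2)).div h3 (pow_ne_zero 3 hr))).sub
      ((hasDerivAt_const r (16*Q^4*y^2*ω^2)).div h4 (pow_ne_zero 4 hr))
  have heq : Vrn Q ω x y ℓ = fun s : ℝ => (1 + x)^2 * ω^2 + 4*Q*ω^2*(x^2 + 2*x + y)/s
    + ((ℓ : ℝ)*((ℓ : ℝ) + 1) + 4*Q^2*ω^2*(x^2 + 2*x - (y - 4)*y))/s^2
    - 16*Q^3*(y - 1)*y*ω^2/s^3 - 16*Q^4*y^2*ω^2/s^4 := rfl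
  rw [heq]
  refine hd.congr_deriv ?_
  field_simp
  ring

/-- If the cubic `A r³ + 2B r² - C r - D` is positive at `s`, it stays positive at `t > s`,
provided either (`B > 0` and `C ≤ 0`) or (`C ≥ 0` and `D > 0`). -/
lemma cubic_mono (A B C D s t : ℝ) (hA : 0 < A) (hs : 0 < s) (hst : s < t)
    (h : (0 < B ∧ C ≤ 0) ∨ (0 ≤ C ∧ 0 < D))
    (hps : 0 < A*s^3 + 2*B*s^2 - C*s - D) :
    0 < A*t^3 + 2*B*t^2 - C*t - D := by
  have ht : 0 < t := hs.trans hst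
  rcases h with ⟨hB, hC⟩ | ⟨hC, hD⟩
  · have c1 : s^3 < t^3 := by
      have h0 : 0 < t^2 + t*s + s^2 := by nlinarith [mul_pos hs ht, mul_pos ht ht, mul_pos hs hs]
      nlinarith [mul_pos (sub_pos.2 hst) h0]
    have c2 : s^2 < t^2 := by nlinarith
    nlinarith [mul_lt_mul_of_pos_left c1 hA, mul_lt_mul_of_pos_left c2 hB,
      mul_le_mul_of_nonneg_right hst.le (neg_nonneg.2 hC)]
  · have hid : s^2*(A*t^3 + 2*B*t^2 - C*t - D) - t^2*(A*s^3 + 2*B*s^2 - C*s - D)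
        = (t-s)*(A*s^2*t^2 + C*(s*t) + D*(s+t)) := by ring
    have hfac : 0 < A*s^2*t^2 + C*(s*t) + D*(s+t) := by
      have h1 : 0 < A*s^2*t^2 := by positivity
      have h2 : 0 ≤ C*(s*t) := mul_nonneg hC (mul_pos hs ht).le
      have h3 : 0 < D*(s+t) := mul_pos hD (by linarith)
      linarith
    have key : 0 < s^2*(A*t^3 + 2*B*t^2 - C*t - D) - t^2*(A*s^3 + 2*B*s^2 - C*s - D) := by
      rw [hid]; exact mul_pos (by linarith) hfac
    have h4 : 0 < t^2*(A*s^3 + 2*B*s^2 - C*s - D) := mul_pos (pow_pos ht 2) hps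
    by_contra hcon
    push_neg at hcon
    nlinarith [mul_nonneg (sq_nonneg s) (neg_nonneg.2 hcon)]

lemma coeff_cond (Q ω x y : ℝ) (ℓ : ℕ) (hQ : 0 < Q) (hω : 0 < ω)
    (hx : 0 < x) (hy : 0 < y) :
    (0 < (ℓ:ℝ)*((ℓ:ℝ)+1) + 4*Q^2*ω^2*(x^2+2*x-(y-4)*y) ∧ 48*Q^3*(y-1)*y*ω^2 ≤ 0)
      ∨ (0 ≤ 48*Q^3*(y-1)*y*ω^2 ∧ 0 < 64*Q^4*y^2*ω^2) := by
  rcases le_or_gt y 1 with hy1 | hy1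
  · left
    constructor
    · have h1 : (0:ℝ) ≤ (ℓ:ℝ)*((ℓ:ℝ)+1) := by positivity
      have h2 : 0 < x^2 + 2*x - (y-4)*y := by nlinarith
      have h3 : 0 < 4*Q^2*ω^2*(x^2+2*x-(y-4)*y) := by positivity
      linarith
    · have h1 : 0 ≤ Q^3*ω^2*((1-y)*y) := by
        have : 0 ≤ (1-y)*y := mul_nonneg (by linarith) hy.le
        positivity
      nlinarith
  · right
    constructor
    · have h1 : 0 ≤ Q^3*ω^2*((y-1)*y) := by
        have : 0 ≤ (y-1)*y := mul_nonneg (by linarith) hy.le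
        positivity
      nlinarith
    · positivity


/-- The extremal Reissner–Nordström effective potential admits no trapping well. -/
theorem stmt_0 (Q ω x y : ℝ) (ℓ : ℕ) (hQ : 0 < Q) (hω : 0 < ω)
    (hx : 0 < x) (hy : 0 < y) :
    ¬ ∃ a b c : ℝ, 0 < a ∧ a < b ∧ b < c ∧
      Vrn Q ω x y ℓ b < Vrn Q ω x y ℓ a ∧ Vrn Q ω x y ℓ b < Vrn Q ω x y ℓ c := by
  rintro ⟨a, b, c, ha, hab, hbc, hwa, hwc⟩
  have hb : 0 < b := ha.trans hab
  have hc : 0 < c := hb.trans hbc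
  set V := Vrn Q ω x y ℓ with hV
  have hcont : ∀ u v : ℝ, 0 < u → ContinuousOn V (Set.Icc u v) := fun u v hu z hz =>
    ((Vrn_hasDerivAt Q ω x y ℓ (hu.trans_le hz.1).ne').differentiableAt.continuousAt).continuousWithinAt
  have hdiff : ∀ u v : ℝ, 0 < u → DifferentiableOn ℝ V (Set.Ioo u v) := fun u v hu z hz =>
    (Vrn_hasDerivAt Q ω x y ℓ (hu.trans hz.1).ne').differentiableAt.differentiableWithinAt
  obtain ⟨s, hs, hds⟩ := exists_deriv_eq_slope V hab (hcont a b ha) (hdiff a b ha)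
  obtain ⟨t, ht, hdt⟩ := exists_deriv_eq_slope V hbc (hcont b c hb) (hdiff b c hb)
  have hs0 : 0 < s := ha.trans hs.1
  have ht0 : 0 < t := hb.trans ht.1
  have hst : s < t := hs.2.trans ht.1
  rw [(Vrn_hasDerivAt Q ω x y ℓ hs0.ne').deriv] at hds
  rw [(Vrn_hasDerivAt Q ω x y ℓ ht0.ne').deriv] at hdt
  set A := 4*Q*ω^2*(x^2+2*x+y) with hA
  set B := (ℓ:ℝ)*((ℓ:ℝ)+1) + 4*Q^2*ω^2*(x^2+2*x-(y-4)*y) with hB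
  set C := 48*Q^3*(y-1)*y*ω^2 with hC
  set D := 64*Q^4*y^2*ω^2 with hD
  -- positivity of the cubic at s
  have hps : 0 < A*s^3 + 2*B*s^2 - C*s - D := by
    have h5 : 0 < s^5 := pow_pos hs0 5
    have hlt : -(A*s^3 + 2*B*s^2 - C*s - D)/s^5 < 0 := by
      rw [hds]; exact div_neg_of_neg_of_pos (by linarith) (by linarith)
    rw [neg_div] at hlt
    have h2 : 0 < (A*s^3 + 2*B*s^2 - C*s - D)/s^5 := by linarith
    have := mul_pos h2 h5
    rwa [div_mul_cancel₀ _ h5.ne'] at this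
  -- negativity of the cubic at t
  have hpt : A*t^3 + 2*B*t^2 - C*t - D < 0 := by
    have h5 : 0 < t^5 := pow_pos ht0 5
    have hgt : 0 < -(A*t^3 + 2*B*t^2 - C*t - D)/t^5 := by
      rw [hdt]; exact div_pos (by linarith) (by linarith)
    rw [neg_div] at hgt
    have h2 : (A*t^3 + 2*B*t^2 - C*t - D)/t^5 < 0 := by linarith
    have := mul_neg_of_neg_of_pos h2 h5
    rwa [div_mul_cancel₀ _ h5.ne'] at this
  have hA0 : 0 < A := by
    have h0 : 0 < x^2 + 2*x + y := by positivity
    rw [hA]; positivity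
  have hcond := coeff_cond Q ω x y ℓ hQ hω hx hy
  rw [← hB, ← hC, ← hD] at hcond
  linarith [cubic_mono A B C D s t hA0 hs0 hst hcond hps]
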